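/- For the continued fraction data a_0 = 1, a_{2k-1} = 2(1+x)^{-1}, a_{2k} = 2 (k ≥ 1) with x = τ(X_{n-1}) a conjugate of X_{n-1} (so -2 < x < 2, x ≠ -1), the limit of the convergents p_k/q_k (defined by p_k = a_k p_{k-1} + p_{k-2}, q_k = a_k q_{k-1} + q_{k-2}, p_{-1}=1, p_0=1, q_{-1}=0, q_0=1) exists and equals √(2 + x). -/

import Mathlib

open Real Filter Finset

noncomputable def X (n : ℕ) : ℝ := 2 * Real.cos (Real.pi / 2 ^ (n + 1))

theorem stmt5 (n : ℕ) (hn : 1 ≤ n) (x : ℝ)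
    (hconj : ∃ k : ℕ, k < 2 ^ (n - 1) ∧
      x = 2 * Real.cos ((2 * k + 1) * Real.pi / 2 ^ n))
    (hx1 : -2 < x) (hx2 : x < 2) (hx3 : x ≠ -1)
    (a P Q : ℕ → ℝ)
    (ha0 : a 0 = 1)
    (haodd : ∀ k : ℕ, 1 ≤ k → a (2 * k - 1) = 2 / (1 + x))
    (haeven : ∀ k : ℕ, 1 ≤ k → a (2 * k) = 2)
    (hP0 : P 0 = 1) (hP1 : P 1 = a 0)
    (hQ0 : Q 0 = 0) (hQ1 : Q 1 = 1)
    (hPrec : ∀ k, P (k + 2) = a (k + 1) * P (k + 1) + P k)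
    (hQrec : ∀ k, Q (k + 2) = a (k + 1) * Q (k + 1) + Q k) :
    Tendsto (fun k => P (k + 1) / Q (k + 1)) atTop (nhds (Real.sqrt (2 + x))) := by
  clear hconj hn
  set y := Real.sqrt (2 + x) with hydef
  have h2x : (0:ℝ) < 2 + x := by linarith
  have hy2 : y ^ 2 = 2 + x := Real.sq_sqrt h2x.le
  have hy0 : 0 < y := Real.sqrt_pos.mpr h2x
  have hy1 : y ≠ 1 := by
    intro h
    apply hx3
    nlinarith [hy2]
  have hym1 : y - 1 ≠ 0 := sub_ne_zero.mpr hy1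
  have hyp1 : y + 1 ≠ 0 := by positivity
  -- key induction
  have key : ∀ z : ℝ, z ^ 2 = 2 + x → z + 1 ≠ 0 → z - 1 ≠ 0 →
      ∀ m : ℕ, P (2*m) - z * Q (2*m) = ((z-1)/(z+1))^m ∧
        P (2*m+1) - z * Q (2*m+1) = (1-z) * ((z-1)/(z+1))^m := by
    intro z hz hz1 hz2 m
    have h1x : 1 + x = (z-1)*(z+1) := by nlinarith [hz]
    induction m with
    | zero => simp [hP0, hQ0, hP1, hQ1, ha0]
    | succ m ih =>
      obtain ⟨ihE, ihO⟩ := ih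
      have hb : a (2*m+1) = 2/(1+x) := by
        have h := haodd (m+1) (by omega)
        have h' : 2*(m+1)-1 = 2*m+1 := by omega
        rwa [h'] at h
      have hc : a (2*m+2) = 2 := by
        have h := haeven (m+1) (by omega)
        have h' : 2*(m+1) = 2*m+2 := by omega
        rwa [h'] at h
      have e2 : P (2*m+2) - z * Q (2*m+2) = ((z-1)/(z+1))^(m+1) := by
        rw [hPrec (2*m), hQrec (2*m), hb]
        have expand : 2/(1+x) * P (2*m+1) + P (2*m)
            - z*(2/(1+x) * Q (2*m+1) + Q (2*m))
            = 2/(1+x) * (P (2*m+1) - z*Q (2*m+1)) + (P (2*m) - z * Q (2*m)) := by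
          ring
        rw [expand, ihO, ihE, h1x, pow_succ]
        field_simp
        ring
      constructor
      · have hidx : 2*(m+1) = 2*m+2 := by omega
        rw [hidx]; exact e2
      · have hidx : 2*(m+1)+1 = 2*m+1+2 := by omega
        rw [hidx, hPrec (2*m+1), hQrec (2*m+1), hc]
        have hidx2 : 2*m+1+1 = 2*m+2 := by omega
        rw [hidx2]
        have expand : 2 * P (2*m+2) + P (2*m+1) - z*(2 * Q (2*m+2) + Q (2*m+1))
            = 2 * (P (2*m+2) - z*Q (2*m+2)) + (P (2*m+1) - z * Q (2*m+1)) := by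
          ring
        rw [expand, e2, ihO, pow_succ]
        field_simp
        ring
  have hz2 : ((-y) : ℝ) ^ 2 = 2 + x := by rw [show ((-y:ℝ))^2 = y^2 by ring]; exact hy2
  have hz1 : (-y) + 1 ≠ 0 := by intro h; apply hy1; linarith
  have hz0 : (-y) - 1 ≠ 0 := by intro h; linarith
  have keyY := key y hy2 hyp1 hym1
  have keyZ := key (-y) hz2 hz1 hz0
  set r : ℝ := (y-1)/(y+1) with hrdef
  set s : ℝ := ((-y)-1)/((-y)+1) with hsdef
  have hrs : r * s = 1 := by
    rw [hrdef, hsdef]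
    field_simp
    ring
  have hr0 : r ≠ 0 := div_ne_zero hym1 hyp1
  set R := |r| with hRdef
  have hR0 : (0:ℝ) ≤ R := abs_nonneg r
  have hRlt : R < 1 := by
    rw [hRdef, hrdef, abs_div, abs_of_pos (show (0:ℝ) < y+1 by linarith),
      div_lt_one (show (0:ℝ) < y+1 by linarith), abs_lt]
    constructor <;> linarith
  have hR2 : R^2 < 1 := by nlinarith
  set c : ℝ := min (2*y) 2 with hcdef
  have hc0 : (0:ℝ) < c := lt_min (by linarith) two_pos
  set C1 : ℝ := 2*y/(1-R^2) with hC1def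
  set C2 : ℝ := 2*y*|1-y|/c with hC2def
  have hC10 : 0 ≤ C1 := by
    apply div_nonneg (by linarith)
    linarith
  have hC20 : 0 ≤ C2 := by positivity
  set C : ℝ := max C1 C2 with hCdef
  clear_value y r s R c C1 C2 C
  -- main bound
  have bound : ∀ k : ℕ, |P (k+1)/Q (k+1) - y| ≤ C * R^k := by
    intro k
    have hrsm : ∀ m : ℕ, r^m * s^m = 1 := by
      intro m; rw [← mul_pow, hrs, one_pow]
    rcases Nat.even_or_odd k with ⟨m, hm⟩ | ⟨m, hm⟩
    · -- k = 2m, k+1 = 2m+1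
      have hk : k = 2*m := by omega
      have hE : P (2*m+1) - y * Q (2*m+1) = (1-y) * r^m := (keyY m).2
      have hF : P (2*m+1) + y * Q (2*m+1) = (1+y) * s^m := by
        linear_combination (keyZ m).2
      have hu0 : r^m ≠ 0 := pow_ne_zero m hr0
      have hQu : Q (2*m+1) * (2*y*r^m) = (1+y) - (1-y)*(r^m)^2 := by
        have h1 : 2*y*Q (2*m+1) = (1+y)*s^m - (1-y)*r^m := by linarith
        calc Q (2*m+1) * (2*y*r^m) = (2*y*Q (2*m+1))*r^m := by ring
          _ = ((1+y)*s^m - (1-y)*r^m)*r^m := by rw [h1]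
          _ = (1+y)*(r^m*s^m) - (1-y)*(r^m)^2 := by ring
          _ = (1+y) - (1-y)*(r^m)^2 := by rw [hrsm m]; ring
      have hu2 : (r^m)^2 = R^(2*m) := by
        rw [show 2*m = m*2 by ring, pow_mul, hRdef, ← abs_pow, sq_abs]
      have hu2le : (r^m)^2 ≤ 1 := by
        rw [hu2]; exact pow_le_one₀ hR0 hRlt.le
      have hu2nn : (0:ℝ) ≤ (r^m)^2 := sq_nonneg _
      have hd : c ≤ (1+y) - (1-y)*(r^m)^2 := by
        rcases le_total y 1 with h | h
        · have h2 : (1-y)*(r^m)^2 ≤ (1-y)*1 :=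
            mul_le_mul_of_nonneg_left hu2le (by linarith)
          calc c ≤ 2*y := by rw [hcdef]; exact min_le_left _ _
            _ ≤ (1+y) - (1-y)*(r^m)^2 := by linarith
        · have h2 : (1-y)*(r^m)^2 ≤ 0 :=
            mul_nonpos_of_nonpos_of_nonneg (by linarith) hu2nn
          calc c ≤ 2 := by rw [hcdef]; exact min_le_right _ _
            _ ≤ (1+y) - (1-y)*(r^m)^2 := by linarith
      have hd0 : (0:ℝ) < (1+y) - (1-y)*(r^m)^2 := lt_of_lt_of_le hc0 hd
      have hQne : Q (2*m+1) ≠ 0 := by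
        intro h
        rw [h, zero_mul] at hQu
        linarith
      have hdiff : P (2*m+1)/Q (2*m+1) - y
          = (2*y*(1-y)*(r^m)^2) / ((1+y) - (1-y)*(r^m)^2) := by
        rw [show P (2*m+1)/Q (2*m+1) - y = (P (2*m+1) - y*Q (2*m+1))/Q (2*m+1) by
          field_simp]
        rw [hE, div_eq_div_iff hQne (ne_of_gt hd0)]
        linear_combination (-((1-y)*r^m)) * hQu
      have hk1 : k+1 = 2*m+1 := by omega
      rw [hk1, hdiff, abs_div, abs_of_pos hd0]
      have habsnum : |2*y*(1-y)*(r^m)^2| = 2*y*(|1-y|)*(r^m)^2 := by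
        rw [abs_mul, abs_mul, abs_of_pos (show (0:ℝ) < 2*y by linarith),
          abs_of_nonneg hu2nn]
      rw [habsnum]
      calc 2*y*(|1-y|)*(r^m)^2 / ((1+y) - (1-y)*(r^m)^2)
          ≤ 2*y*(|1-y|)*(r^m)^2 / c := by
            apply div_le_div_of_nonneg_left _ hc0 hd
            positivity
        _ = C2 * (r^m)^2 := by rw [hC2def]; ring
        _ = C2 * R^k := by rw [hu2, hk]
        _ ≤ C * R^k := by
            rw [hCdef]
            exact mul_le_mul_of_nonneg_right (le_max_right _ _) (by positivity)
    · -- k = 2m+1, k+1 = 2*(m+1)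
      have hE : P (2*(m+1)) - y * Q (2*(m+1)) = r^(m+1) := (keyY (m+1)).1
      have hF : P (2*(m+1)) + y * Q (2*(m+1)) = s^(m+1) := by
        linear_combination (keyZ (m+1)).1
      have hu0 : r^(m+1) ≠ 0 := pow_ne_zero _ hr0
      have hQu : Q (2*(m+1)) * (2*y*r^(m+1)) = 1 - (r^(m+1))^2 := by
        have h1 : 2*y*Q (2*(m+1)) = s^(m+1) - r^(m+1) := by linarith
        calc Q (2*(m+1)) * (2*y*r^(m+1)) = (2*y*Q (2*(m+1)))*r^(m+1) := by ring
          _ = (s^(m+1) - r^(m+1))*r^(m+1) := by rw [h1]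
          _ = (r^(m+1)*s^(m+1)) - (r^(m+1))^2 := by ring
          _ = 1 - (r^(m+1))^2 := by rw [hrsm (m+1)]
      have hu2 : (r^(m+1))^2 = R^(2*(m+1)) := by
        rw [show 2*(m+1) = (m+1)*2 by ring, pow_mul, hRdef, ← abs_pow, sq_abs]
      have hu2le : (r^(m+1))^2 ≤ R^2 := by
        rw [hu2]
        exact pow_le_pow_of_le_one hR0 hRlt.le (by omega)
      have hd0 : (0:ℝ) < 1 - (r^(m+1))^2 := by linarith
      have hQne : Q (2*(m+1)) ≠ 0 := by
        intro h
        rw [h, zero_mul] at hQu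
        linarith
      have hdiff : P (2*(m+1))/Q (2*(m+1)) - y
          = (2*y*(r^(m+1))^2) / (1 - (r^(m+1))^2) := by
        rw [show P (2*(m+1))/Q (2*(m+1)) - y
            = (P (2*(m+1)) - y*Q (2*(m+1)))/Q (2*(m+1)) by field_simp]
        rw [hE, div_eq_div_iff hQne (ne_of_gt hd0)]
        linear_combination (-(r^(m+1))) * hQu
      have hk1 : k+1 = 2*(m+1) := by omega
      rw [hk1, hdiff, abs_div, abs_of_pos hd0]
      have habsnum : |2*y*(r^(m+1))^2| = 2*y*(r^(m+1))^2 := abs_of_nonneg (by positivity)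
      rw [habsnum]
      calc 2*y*(r^(m+1))^2 / (1 - (r^(m+1))^2)
          ≤ 2*y*(r^(m+1))^2 / (1-R^2) := by
            apply div_le_div_of_nonneg_left _ (by linarith) (by linarith)
            positivity
        _ = C1 * (r^(m+1))^2 := by rw [hC1def]; ring
        _ = C1 * R^(k+1) := by rw [hu2, hk1]
        _ ≤ C1 * R^k := by
            apply mul_le_mul_of_nonneg_left _ hC10
            calc R^(k+1) = R^k * R := pow_succ R k
              _ ≤ R^k * 1 := by
                  apply mul_le_mul_of_nonneg_left hRlt.le (pow_nonneg hR0 k)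
              _ = R^k := mul_one _
        _ ≤ C * R^k := by
            rw [hCdef]
            exact mul_le_mul_of_nonneg_right (le_max_left _ _) (by positivity)
  have hg : Tendsto (fun k : ℕ => C * R^k) atTop (nhds 0) := by
    have h := tendsto_pow_atTop_nhds_zero_of_lt_one hR0 hRlt
    simpa using h.const_mul C
  have h1 : Tendsto (fun k => P (k+1)/Q (k+1) - y) atTop (nhds 0) := by
    apply squeeze_zero_norm _ hg
    intro k
    simpa [Real.norm_eq_abs] using bound k
  simpa using h1.add_const y
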